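/- Let Δ₅ ⊂ ℝ² be the convex hull of (0,0), (5,0), (5,2), (7/2,7/2) and let P₅(x,y) = 4·x³·y³·(x+y)²·(x−y)². Then ∫_{Δ₅} P₅(x,y) dxdy = 391880669/360. -/

import Mathlib

open MeasureTheory

lemma combo3_mem {s : Set (ℝ × ℝ)} {a b c : ℝ × ℝ} (ha : a ∈ s) (hb : b ∈ s) (hc : c ∈ s)
    {α β γ : ℝ} (hα : 0 ≤ α) (hβ : 0 ≤ β) (hγ : 0 ≤ γ) (hsum : α + β + γ = 1) :
    α • a + β • b + γ • c ∈ convexHull ℝ s := by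
  have := Finset.centerMass_mem_convexHull (Finset.univ : Finset (Fin 3))
    (w := ![α, β, γ]) (z := ![a, b, c])
    (by intro i _; fin_cases i <;> assumption)
    (by simp [Fin.sum_univ_three, hsum])
    (by intro i _; fin_cases i <;> assumption)
  rw [Finset.centerMass, Fin.sum_univ_three, Fin.sum_univ_three] at this
  simpa [hsum] using this

lemma hull_eq :
    convexHull ℝ {((0 : ℝ), (0 : ℝ)), (5, 0), (5, 2), (7 / 2, 7 / 2)} =
      {p : ℝ × ℝ | 0 ≤ p.2 ∧ p.2 ≤ p.1 ∧ p.1 ≤ 5 ∧ p.1 + p.2 ≤ 7} := by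
  apply le_antisymm
  · apply convexHull_min
    · rintro p (rfl | rfl | rfl | rfl) <;> norm_num
    · intro p hp q hq u v hu hv huv
      simp only [Set.mem_setOf_eq] at hp hq ⊢
      simp only [Prod.fst_add, Prod.snd_add, Prod.smul_fst, Prod.smul_snd, smul_eq_mul]
      refine ⟨by nlinarith [hp.1, hq.1], by nlinarith [hp.2.1, hq.2.1],
        by nlinarith [hp.2.2.1, hq.2.2.1], by nlinarith [hp.2.2.2, hq.2.2.2]⟩
  · rintro ⟨x, y⟩ ⟨h1, h2, h3, h4⟩
    simp only [Set.mem_setOf_eq] at h1 h2 h3 h4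
    by_cases hc : 5 * y ≤ 2 * x
    · have := combo3_mem (s := {((0 : ℝ), (0 : ℝ)), (5, 0), (5, 2), (7 / 2, 7 / 2)})
        (a := ((0 : ℝ), (0 : ℝ))) (b := (5, 0)) (c := (5, 2))
        (by simp) (by simp) (by simp)
        (α := 1 - x / 5) (β := x / 5 - y / 2) (γ := y / 2)
        (by linarith) (by linarith) (by linarith) (by ring)
      convert this using 1
      rw [Prod.ext_iff]
      constructor <;> simp <;> ring
    · have := combo3_mem (s := {((0 : ℝ), (0 : ℝ)), (5, 0), (5, 2), (7 / 2, 7 / 2)})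
        (a := ((0 : ℝ), (0 : ℝ))) (b := (5, 2)) (c := (7 / 2, 7 / 2))
        (by simp) (by simp) (by simp)
        (α := (21 - 3 * x - 3 * y) / 21) (β := (x - y) / 3) (γ := (10 * y - 4 * x) / 21)
        (by linarith) (by linarith) (by linarith) (by ring)
      convert this using 1
      rw [Prod.ext_iff]
      constructor <;> simp <;> ring

/-- Inner integral: for `0 ≤ t`, `∫_0^t 4x³y³(x+y)²(x−y)² dy`. -/
lemma inner_int (x t : ℝ) (ht : 0 ≤ t) :
    (∫ y in Set.Icc (0 : ℝ) t, 4 * x ^ 3 * y ^ 3 * (x + y) ^ 2 * (x - y) ^ 2) =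
      x ^ 7 * t ^ 4 - 4 / 3 * x ^ 5 * t ^ 6 + 1 / 2 * x ^ 3 * t ^ 8 := by
  rw [integral_Icc_eq_integral_Ioc, ← intervalIntegral.integral_of_le ht]
  have h : (∫ y in (0 : ℝ)..t, 4 * x ^ 3 * y ^ 3 * (x + y) ^ 2 * (x - y) ^ 2) =
      (x ^ 7 * t ^ 4 - 4 / 3 * x ^ 5 * t ^ 6 + 1 / 2 * x ^ 3 * t ^ 8) -
      (x ^ 7 * 0 ^ 4 - 4 / 3 * x ^ 5 * 0 ^ 6 + 1 / 2 * x ^ 3 * 0 ^ 8) := by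
    apply intervalIntegral.integral_eq_sub_of_hasDerivAt
      (f := fun y => x ^ 7 * y ^ 4 - 4 / 3 * x ^ 5 * y ^ 6 + 1 / 2 * x ^ 3 * y ^ 8)
    · intro y _
      have h := (((hasDerivAt_pow 4 y).const_mul (x ^ 7)).sub
        ((hasDerivAt_pow 6 y).const_mul (4 / 3 * x ^ 5))).add
        ((hasDerivAt_pow 8 y).const_mul (1 / 2 * x ^ 3))
      refine h.congr_deriv ?_
      norm_num [Nat.reduceSub]; ring
    · exact (by fun_prop : Continuous fun y : ℝ =>
        4 * x ^ 3 * y ^ 3 * (x + y) ^ 2 * (x - y) ^ 2).intervalIntegrable _ _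
  rw [h]; ring

/-- The Duistermaat–Heckman volume of the moment polytope `Δ₅` of the wonderful
compactification `X₅` of the symmetric space of type AIII(2,5):
`∫_{Δ₅} 4x³y³(x+y)²(x−y)² dxdy = 391880669/360`. -/
theorem volume_Delta5 :
    let Δ : Set (ℝ × ℝ) := convexHull ℝ
      {((0 : ℝ), (0 : ℝ)), (5, 0), (5, 2), (7 / 2, 7 / 2)}
    let P : ℝ × ℝ → ℝ := fun p =>
      4 * p.1 ^ 3 * p.2 ^ 3 * (p.1 + p.2) ^ 2 * (p.1 - p.2) ^ 2
    (∫ p in Δ, P p) = 391880669 / 360 := by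
  intro Δ P
  set R : Set (ℝ × ℝ) := {p : ℝ × ℝ | 0 ≤ p.2 ∧ p.2 ≤ p.1 ∧ p.1 ≤ 5 ∧ p.1 + p.2 ≤ 7} with hR
  have hΔR : Δ = R := hull_eq
  have hfin : Set.Finite {((0 : ℝ), (0 : ℝ)), (5, 0), (5, 2), (7 / 2, 7 / 2)} :=
    Set.toFinite _
  have hcomp : IsCompact Δ := hfin.isCompact_convexHull ℝ
  have hRmeas : MeasurableSet R := hΔR ▸ hcomp.isClosed.measurableSet
  have hPcont : Continuous P := by fun_prop
  have hInt : IntegrableOn P R := by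
    rw [← hΔR]; exact hPcont.continuousOn.integrableOn_compact hcomp
  -- characterize membership in R
  have hmem : ∀ x y : ℝ, ((x, y) ∈ R) ↔
      (x ∈ Set.Icc (0 : ℝ) 5 ∧ y ∈ Set.Icc (0 : ℝ) (min x (7 - x))) := by
    intro x y
    simp only [hR, Set.mem_setOf_eq, Set.mem_Icc, le_min_iff]
    constructor
    · rintro ⟨a, b, c, d⟩; exact ⟨⟨by linarith, c⟩, a, b, by linarith⟩
    · rintro ⟨⟨a, b⟩, c, d, e⟩; exact ⟨c, d, b, by linarith⟩
  rw [hΔR, ← integral_indicator hRmeas]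
  rw [show (volume : Measure (ℝ × ℝ)) = (volume : Measure ℝ).prod volume from
    MeasureTheory.Measure.volume_eq_prod ℝ ℝ]
  have hIndInt : Integrable (R.indicator P) ((volume : Measure ℝ).prod volume) := by
    rw [← MeasureTheory.Measure.volume_eq_prod]
    exact (integrable_indicator_iff hRmeas).2 hInt
  rw [integral_prod _ hIndInt]
  -- inner integral
  have hinner : ∀ x : ℝ, (∫ y, R.indicator P (x, y)) =
      (Set.Icc (0 : ℝ) 5).indicator
        (fun x => x ^ 7 * (min x (7 - x)) ^ 4 - 4 / 3 * x ^ 5 * (min x (7 - x)) ^ 6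
          + 1 / 2 * x ^ 3 * (min x (7 - x)) ^ 8) x := by
    intro x
    by_cases hx : x ∈ Set.Icc (0 : ℝ) 5
    · rw [Set.indicator_of_mem hx]
      have hfun : (fun y => R.indicator P (x, y)) =
          (Set.Icc (0 : ℝ) (min x (7 - x))).indicator (fun y => P (x, y)) := by
        funext y
        by_cases hy : (x, y) ∈ R
        · rw [Set.indicator_of_mem hy, Set.indicator_of_mem ((hmem x y).1 hy).2]
        · rw [Set.indicator_of_notMem hy, Set.indicator_of_notMem]
          intro h; exact hy ((hmem x y).2 ⟨hx, h⟩)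
      rw [hfun, integral_indicator measurableSet_Icc]
      apply inner_int
      simp only [Set.mem_Icc] at hx
      exact le_min hx.1 (by linarith [hx.2])
    · rw [Set.indicator_of_notMem hx]
      have hzero : ∀ y : ℝ, R.indicator P (x, y) = 0 := by
        intro y
        apply Set.indicator_of_notMem
        intro h; exact hx ((hmem x y).1 h).1
      simp only [hzero, integral_zero]
  simp_rw [hinner]
  rw [integral_indicator measurableSet_Icc, integral_Icc_eq_integral_Ioc,
    ← intervalIntegral.integral_of_le (by norm_num : (0 : ℝ) ≤ 5)]
  set F : ℝ → ℝ := fun x => x ^ 7 * (min x (7 - x)) ^ 4 - 4 / 3 * x ^ 5 * (min x (7 - x)) ^ 6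
    + 1 / 2 * x ^ 3 * (min x (7 - x)) ^ 8 with hF
  have hFcont : Continuous F := by
    have hm : Continuous fun x : ℝ => min x (7 - x) :=
      continuous_id.min (continuous_const.sub continuous_id)
    fun_prop
  have hsplit : (∫ x in (0 : ℝ)..(7 / 2 : ℝ), F x) + (∫ x in (7 / 2 : ℝ)..(5 : ℝ), F x) =
      ∫ x in (0 : ℝ)..(5 : ℝ), F x :=
    intervalIntegral.integral_add_adjacent_intervals
      (hFcont.intervalIntegrable _ _) (hFcont.intervalIntegrable _ _)
  rw [← hsplit]
  have hp1 : (∫ x in (0 : ℝ)..(7 / 2 : ℝ), F x) = (7 / 2 : ℝ) ^ 12 / 72 - 0 ^ 12 / 72 := by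
    rw [show (∫ x in (0 : ℝ)..(7 / 2 : ℝ), F x) = ∫ x in (0 : ℝ)..(7 / 2 : ℝ), x ^ 11 / 6 from
      intervalIntegral.integral_congr (by
        intro x hx
        rw [Set.uIcc_of_le (by norm_num : (0:ℝ) ≤ 7/2), Set.mem_Icc] at hx
        simp only [hF, min_eq_left (by linarith [hx.1, hx.2] : x ≤ 7 - x)]
        ring)]
    apply intervalIntegral.integral_eq_sub_of_hasDerivAt (f := fun x => x ^ 12 / 72)
    · intro x _
      have h := (hasDerivAt_pow 12 x).div_const 72
      refine h.congr_deriv ?_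
      norm_num [Nat.reduceSub]; ring
    · exact (by fun_prop : Continuous fun x : ℝ => x ^ 11 / 6).intervalIntegrable _ _
  set A : ℝ → ℝ := fun x => 5764801 / 8 * x ^ 4 - 3294172 / 5 * x ^ 5 + 4470662 / 18 * x ^ 6
    - 336140 / 7 * x ^ 7 + 4802 * x ^ 8 - 5488 / 27 * x ^ 9 + x ^ 12 / 72 with hA
  have hp2 : (∫ x in (7 / 2 : ℝ)..(5 : ℝ), F x) = A 5 - A (7 / 2) := by
    rw [show (∫ x in (7 / 2 : ℝ)..(5 : ℝ), F x) = ∫ x in (7 / 2 : ℝ)..(5 : ℝ),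
        (x ^ 7 * (7 - x) ^ 4 - 4 / 3 * x ^ 5 * (7 - x) ^ 6 + 1 / 2 * x ^ 3 * (7 - x) ^ 8) from
      intervalIntegral.integral_congr (by
        intro x hx
        rw [Set.uIcc_of_le (by norm_num : (7/2:ℝ) ≤ 5), Set.mem_Icc] at hx
        simp only [hF, min_eq_right (by linarith [hx.1] : 7 - x ≤ x)])]
    apply intervalIntegral.integral_eq_sub_of_hasDerivAt
    · intro x _
      have h := ((((((((hasDerivAt_pow 4 x).const_mul ((5764801:ℝ) / 8)).sub
        ((hasDerivAt_pow 5 x).const_mul ((3294172:ℝ) / 5))).add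
        ((hasDerivAt_pow 6 x).const_mul ((4470662:ℝ) / 18))).sub
        ((hasDerivAt_pow 7 x).const_mul ((336140:ℝ) / 7))).add
        ((hasDerivAt_pow 8 x).const_mul (4802:ℝ))).sub
        ((hasDerivAt_pow 9 x).const_mul ((5488:ℝ) / 27))).add
        ((hasDerivAt_pow 12 x).div_const 72))
      refine h.congr_deriv ?_
      norm_num [Nat.reduceSub]; ring
    · exact (by fun_prop : Continuous fun x : ℝ =>
        x ^ 7 * (7 - x) ^ 4 - 4 / 3 * x ^ 5 * (7 - x) ^ 6
          + 1 / 2 * x ^ 3 * (7 - x) ^ 8).intervalIntegrable _ _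
  rw [hp1, hp2, hA]
  norm_num
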